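/- Let T be a tree (a connected acyclic simple graph) on a vertex set V with graph distance d, and let z : ℕ → V be a geodesic ray, i.e. d(z(m), z(n)) = |m − n| for all m, n ∈ ℕ. Then for all vertices x, y ∈ V there exists an integer b ∈ ℤ with |b| ≤ d(x, y) such that the sequence of integers d(x, z(k)) − d(y, z(k)) is eventually equal to b, i.e. there is N with d(x, z(k)) − d(y, z(k)) = b for all k ≥ N. (This limit is the Busemann kernel B_ξ(x, y) of the boundary point ξ represented by the ray z.) -/

import Mathlib

lemma aux_ev {V : Type*} (T : SimpleGraph V) (hc : T.Connected)
    (z : ℕ → V)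
    (hgeo : ∀ m n : ℕ, (T.dist (z m) (z n) : ℤ) = |(m : ℤ) - (n : ℤ)|) (x : V) :
    ∃ N : ℕ, ∀ k ≥ N, (T.dist x (z k) : ℤ) - k = (T.dist x (z N) : ℤ) - N := by
  set f : ℕ → ℤ := fun k => (T.dist x (z k) : ℤ) - k with hf
  have hant : Antitone f := by
    apply antitone_nat_of_succ_le
    intro n
    have htri : T.dist x (z (n+1)) ≤ T.dist x (z n) + T.dist (z n) (z (n+1)) :=
      hc.dist_triangle
    have h1 : (T.dist (z n) (z (n+1)) : ℤ) = 1 := by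
      rw [hgeo, show ((n:ℤ) - (n+1 : ℕ)) = -1 by push_cast; ring, abs_neg, abs_one]
    have : (T.dist (z n) (z (n+1)) : ℤ) ≤ 1 := le_of_eq h1
    have htri' : (T.dist x (z (n+1)) : ℤ) ≤ (T.dist x (z n) : ℤ) + (T.dist (z n) (z (n+1)) : ℤ) := by
      exact_mod_cast htri
    simp only [hf]
    push_cast
    omega
  have hlb : ∀ k, -(T.dist x (z 0) : ℤ) ≤ f k := by
    intro k
    have htri : T.dist (z 0) (z k) ≤ T.dist (z 0) x + T.dist x (z k) := hc.dist_triangle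
    have h0 : (T.dist (z 0) (z k) : ℤ) = k := by
      rw [hgeo]; push_cast; rw [zero_sub, abs_neg, abs_of_nonneg (Int.natCast_nonneg k)]
    have hsym : T.dist (z 0) x = T.dist x (z 0) := SimpleGraph.dist_comm
    have htri' : (T.dist (z 0) (z k) : ℤ) ≤ (T.dist (z 0) x : ℤ) + (T.dist x (z k) : ℤ) := by
      exact_mod_cast htri
    simp only [hf]
    omega
  set g : ℕ → ℕ := fun k => (f k + (T.dist x (z 0) : ℤ)).toNat with hg
  set N := Function.argmin g with hN
  refine ⟨N, fun k hk => ?_⟩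
  have h1 : g k ≤ g N := by
    have := hant hk
    simp only [hg]
    omega
  have h2 : ¬ g k < g N := Function.not_lt_argmin g k
  have h3 : g k = g N := le_antisymm h1 (not_lt.mp h2)
  have hk0 := hlb k
  have hN0 := hlb N
  simp only [hg, hf] at h3 hk0 hN0
  omega

theorem stmt_11 {V : Type*} (T : SimpleGraph V) (htree : T.IsTree)
    (z : ℕ → V)
    (hgeo : ∀ m n : ℕ, (T.dist (z m) (z n) : ℤ) = |(m : ℤ) - (n : ℤ)|) :
    ∀ x y : V, ∃ b : ℤ, |b| ≤ (T.dist x y : ℤ) ∧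
      ∃ N : ℕ, ∀ k ≥ N, (T.dist x (z k) : ℤ) - (T.dist y (z k) : ℤ) = b := by
  intro x y
  have hc : T.Connected := htree.isConnected
  obtain ⟨Nx, hNx⟩ := aux_ev T hc z hgeo x
  obtain ⟨Ny, hNy⟩ := aux_ev T hc z hgeo y
  set N := max Nx Ny with hN
  refine ⟨(T.dist x (z N) : ℤ) - (T.dist y (z N) : ℤ), ?_, N, fun k hk => ?_⟩
  · have h1 : T.dist x (z N) ≤ T.dist x y + T.dist y (z N) := hc.dist_triangle
    have h2 : T.dist y (z N) ≤ T.dist y x + T.dist x (z N) := hc.dist_triangle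
    have h3 : T.dist y x = T.dist x y := SimpleGraph.dist_comm
    rw [abs_le]
    constructor <;> [skip; skip] <;>
      · push_cast at h1 h2 ⊢
        omega
  · have hx1 := hNx k (le_trans (le_max_left _ _) hk)
    have hx2 := hNx N (le_max_left _ _)
    have hy1 := hNy k (le_trans (le_max_right _ _) hk)
    have hy2 := hNy N (le_max_right _ _)
    omega
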